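/- Let Σ be a triangulation in ℝⁿ and let O be a nonempty Σ-definable open set. Then O is join-irreducible in the lattice of Σ-definable open sets — i.e. whenever O = A ∪ B with A, B Σ-definable open sets, O = A or O = B — if and only if O = star(σ) for some σ ∈ Σ. -/

import Mathlib

open Set

/-- A polytope in ℝⁿ: the convex hull of a finite set of points. -/
def IsPolytope {n : ℕ} (s : Set (Fin n → ℝ)) : Prop :=
  ∃ V : Finset (Fin n → ℝ), s = convexHull ℝ (V : Set (Fin n → ℝ))

/-- A polyhedron in ℝⁿ: a finite union of polytopes. -/
def IsPolyhedron {n : ℕ} (P : Set (Fin n → ℝ)) : Prop :=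
  ∃ S : Set (Set (Fin n → ℝ)), S.Finite ∧ (∀ s ∈ S, IsPolytope s) ∧ P = ⋃₀ S

/-- A simplex in ℝⁿ: the convex hull of a nonempty finite affinely independent set. -/
def IsSimplex {n : ℕ} (s : Set (Fin n → ℝ)) : Prop :=
  ∃ V : Finset (Fin n → ℝ), V.Nonempty ∧
    AffineIndependent ℝ (fun x : {x : Fin n → ℝ // x ∈ V} => x.val) ∧
    s = convexHull ℝ (V : Set (Fin n → ℝ))

/-- `IsFaceOf s t`: `t` is a simplex with vertex set `W` and `s` is the convex hull
of a nonempty subset of `W`. -/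
def IsFaceOf {n : ℕ} (s t : Set (Fin n → ℝ)) : Prop :=
  ∃ W V : Finset (Fin n → ℝ), W.Nonempty ∧
    AffineIndependent ℝ (fun x : {x : Fin n → ℝ // x ∈ W} => x.val) ∧
    t = convexHull ℝ (W : Set (Fin n → ℝ)) ∧
    V.Nonempty ∧ V ⊆ W ∧ s = convexHull ℝ (V : Set (Fin n → ℝ))

/-- A triangulation in ℝⁿ: a finite set of simplices closed under taking faces, such that
any two members intersect in a common face (or not at all). -/
structure IsTriangulation {n : ℕ} (K : Set (Set (Fin n → ℝ))) : Prop where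
  finite : K.Finite
  simplex : ∀ s ∈ K, IsSimplex s
  face_mem : ∀ s ∈ K, ∀ t, IsFaceOf t s → t ∈ K
  inter : ∀ s ∈ K, ∀ t ∈ K, s ∩ t = ∅ ∨ (IsFaceOf (s ∩ t) s ∧ IsFaceOf (s ∩ t) t)

/-- A set of simplices closed under taking faces. -/
def FaceClosed {n : ℕ} (D : Set (Set (Fin n → ℝ))) : Prop :=
  ∀ s ∈ D, ∀ t, IsFaceOf t s → t ∈ D

/-- A `K`-definable polyhedron: the union of a face-closed subset of `K`. -/
def SigmaDefinable {n : ℕ} (K : Set (Set (Fin n → ℝ))) (C : Set (Fin n → ℝ)) : Prop :=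
  ∃ D ⊆ K, FaceClosed D ∧ C = ⋃₀ D

/-- A `K`-definable open set: the complement in `|K| = ⋃₀ K` of a `K`-definable polyhedron. -/
def SigmaDefOpen {n : ℕ} (K : Set (Set (Fin n → ℝ))) (O : Set (Fin n → ℝ)) : Prop :=
  ∃ C, SigmaDefinable K C ∧ O = ⋃₀ K \ C

/-- The open star of a simplex `s` in a triangulation `K`. -/
def openStar {n : ℕ} (K : Set (Set (Fin n → ℝ))) (s : Set (Fin n → ℝ)) : Set (Fin n → ℝ) :=
  ⋃ t ∈ {t ∈ K | s ⊆ t}, intrinsicInterior ℝ t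

/-- The interior of `S` in the subspace topology of `P`, viewed as a subset of ℝⁿ. -/
def intSub {n : ℕ} (P S : Set (Fin n → ℝ)) : Set (Fin n → ℝ) :=
  Subtype.val '' interior (Subtype.val ⁻¹' S : Set P)

/-- An open subpolyhedron of a polyhedron `P`: a subset of `P` whose complement in `P`
is a polyhedron. -/
def IsOpenSubpoly {n : ℕ} (P O : Set (Fin n → ℝ)) : Prop :=
  O ⊆ P ∧ IsPolyhedron (P \ O)

/-- `s` is a simplex with exactly `k` (affinely independent) vertices. -/
def SimplexWithCard {n : ℕ} (s : Set (Fin n → ℝ)) (k : ℕ) : Prop :=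
  ∃ V : Finset (Fin n → ℝ), V.Nonempty ∧
    AffineIndependent ℝ (fun x : {x : Fin n → ℝ // x ∈ V} => x.val) ∧
    s = convexHull ℝ (V : Set (Fin n → ℝ)) ∧ V.card = k

/-- `P` contains a simplex with `d+1` affinely independent vertices, and no simplex with more;
i.e. the polyhedron `P` has dimension exactly `d`. -/
def PolyDimEq {n : ℕ} (P : Set (Fin n → ℝ)) (d : ℕ) : Prop :=
  (∃ V : Finset (Fin n → ℝ), V.Nonempty ∧
      AffineIndependent ℝ (fun x : {x : Fin n → ℝ // x ∈ V} => x.val) ∧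
      convexHull ℝ (V : Set (Fin n → ℝ)) ⊆ P ∧ V.card = d + 1) ∧
  (∀ V : Finset (Fin n → ℝ),
      AffineIndependent ℝ (fun x : {x : Fin n → ℝ // x ∈ V} => x.val) →
      convexHull ℝ (V : Set (Fin n → ℝ)) ⊆ P → V.card ≤ d + 1)

/-- The polyhedron `P` has dimension at most `d`. -/
def PolyDimLE {n : ℕ} (P : Set (Fin n → ℝ)) (d : ℕ) : Prop :=
  ∀ V : Finset (Fin n → ℝ),
    AffineIndependent ℝ (fun x : {x : Fin n → ℝ // x ∈ V} => x.val) →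
    convexHull ℝ (V : Set (Fin n → ℝ)) ⊆ P → V.card ≤ d + 1

/-- The triangulation `K` has combinatorial dimension exactly `d`. -/
def TriangDimEq {n : ℕ} (K : Set (Set (Fin n → ℝ))) (d : ℕ) : Prop :=
  (∃ s ∈ K, SimplexWithCard s (d + 1)) ∧
  (∀ s ∈ K, ∀ k, SimplexWithCard s k → k ≤ d + 1)

/-- The bounded-depth terms: `bdTerm P k V = V k ∪ (V k ⇨ bdTerm P (k-1) V)`,
where `U ⇨ W = int_P ((P \ U) ∪ W)` is the Heyting implication of open subsets of `P`. -/
def bdTerm {n : ℕ} (P : Set (Fin n → ℝ)) :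
    (k : ℕ) → (Fin (k + 1) → Set (Fin n → ℝ)) → Set (Fin n → ℝ)
  | 0, V => V 0 ∪ intSub P (P \ V 0)
  | k + 1, V => V (Fin.last (k + 1)) ∪
      intSub P ((P \ V (Fin.last (k + 1))) ∪ bdTerm P k (fun i => V i.castSucc))

/-- The finite poset `A` has depth exactly `d`: it has a chain of cardinality `d+1`
and no longer chain. -/
def depthEq (A : Type) [PartialOrder A] (d : ℕ) : Prop :=
  (∃ C : Finset A, IsChain (· ≤ ·) (C : Set A) ∧ C.card = d + 1) ∧
  (∀ C : Finset A, IsChain (· ≤ ·) (C : Set A) → C.card ≤ d + 1)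

/-- An upper set of the poset `(K, ⊆)`. -/
def UpperSetOf {n : ℕ} (K U : Set (Set (Fin n → ℝ))) : Prop :=
  U ⊆ K ∧ ∀ s ∈ U, ∀ t ∈ K, s ⊆ t → t ∈ U

/-- The map sending an upper set of a triangulation to the union of the relative
interiors of its members. -/
def gammaUp {n : ℕ} (U : Set (Set (Fin n → ℝ))) : Set (Fin n → ℝ) :=
  ⋃ s ∈ U, intrinsicInterior ℝ s


lemma intrinsicInterior_eq_interior_of_affineSpan_eq_top {E : Type*} [NormedAddCommGroup E]
    [NormedSpace ℝ E] {s : Set E} (h : affineSpan ℝ s = ⊤) :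
    intrinsicInterior ℝ s = interior s := by
  let e : (affineSpan ℝ s : AffineSubspace ℝ E) ≃ₜ E :=
    { toFun := Subtype.val
      invFun := fun x => ⟨x, h ▸ AffineSubspace.mem_top ℝ E x⟩
      left_inv := fun x => rfl
      right_inv := fun x => rfl
      continuous_toFun := continuous_subtype_val
      continuous_invFun := Continuous.subtype_mk continuous_id _ }
  have h1 : intrinsicInterior ℝ s = e '' (interior (e ⁻¹' s)) := rfl
  rw [h1, ← Homeomorph.preimage_interior, Homeomorph.image_preimage]

theorem mem_intrinsicInterior_convexHull_iff {E : Type*} [NormedAddCommGroup E] [NormedSpace ℝ E]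
    [FiniteDimensional ℝ E] {V : Finset E} (hV : V.Nonempty)
    (ind : AffineIndependent ℝ (fun x : {x : E // x ∈ V} => x.val)) {x : E} :
    x ∈ intrinsicInterior ℝ (convexHull ℝ (V : Set E)) ↔
      ∃ w : E → ℝ, (∀ v ∈ V, 0 < w v) ∧ ∑ v ∈ V, w v = 1 ∧ ∑ v ∈ V, w v • v = x := by
  classical
  obtain ⟨v₀, hv₀⟩ := hV
  set W : Submodule ℝ E := vectorSpan ℝ (V : Set E) with hW
  let φ : W →ᵃⁱ[ℝ] E :=
    (AffineIsometryEquiv.constVAdd ℝ E v₀).toAffineIsometry.comp W.subtypeₗᵢ.toAffineIsometry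
  have hφ : ∀ u : W, φ u = v₀ + u := fun u => by
    simp [φ, AffineIsometryEquiv.constVAdd]; rfl
  let b : {v : E // v ∈ V} → W := fun v =>
    ⟨v.val - v₀, by simpa using vsub_mem_vectorSpan ℝ (Finset.mem_coe.2 v.2) (Finset.mem_coe.2 hv₀)⟩
  have hφb : ∀ i, φ (b i) = i.val := by
    intro i
    rw [hφ]
    simp [b]
  have hφbc : ⇑φ.toAffineMap ∘ b = fun i : {v : E // v ∈ V} => i.val := funext hφb
  have indb : AffineIndependent ℝ b := by
    apply AffineIndependent.of_comp φ.toAffineMap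
    rw [hφbc]; exact ind
  have hb0 : b ⟨v₀, hv₀⟩ = 0 := by
    apply Subtype.ext; simp [b]
  have spanb : Submodule.span ℝ (Set.range b) = ⊤ := by
    apply Submodule.map_injective_of_injective W.injective_subtype
    rw [Submodule.map_span, Submodule.map_top, Submodule.range_subtype]
    have himg : W.subtype '' Set.range b = (fun v => v - v₀) '' (V : Set E) := by
      ext z
      constructor
      · rintro ⟨u, ⟨i, rfl⟩, rfl⟩; exact ⟨i.val, Finset.mem_coe.2 i.2, rfl⟩
      · rintro ⟨v, hv, rfl⟩; exact ⟨b ⟨v, hv⟩, ⟨⟨v, hv⟩, rfl⟩, rfl⟩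
    rw [himg, hW]
    rw [vectorSpan_eq_span_vsub_set_right ℝ (Finset.mem_coe.2 hv₀)]; rfl
  have tot : affineSpan ℝ (Set.range b) = ⊤ := by
    rw [AffineSubspace.affineSpan_eq_top_iff_vectorSpan_eq_top_of_nonempty ℝ W W
      ⟨b ⟨v₀, hv₀⟩, Set.mem_range_self _⟩]
    rw [vectorSpan_eq_span_vsub_set_right ℝ (Set.mem_range_self (⟨v₀, hv₀⟩ : {v : E // v ∈ V}))]
    rw [hb0]
    have himg : (· -ᵥ (0 : W)) '' Set.range b = Set.range b := by
      ext z; simp [vsub_eq_sub]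
    rw [himg, spanb]
  let B : AffineBasis {v : E // v ∈ V} ℝ W := ⟨b, indb, tot⟩
  have hBcoe : ⇑B = b := rfl
  have hrange : ⇑φ '' Set.range b = (V : Set E) := by
    ext z
    constructor
    · rintro ⟨u, ⟨i, rfl⟩, rfl⟩; rw [hφb]; exact i.2
    · rintro hz; exact ⟨b ⟨z, hz⟩, Set.mem_range_self _, hφb _⟩
  have hull_eq : convexHull ℝ (V : Set E) = ⇑φ '' convexHull ℝ (Set.range b) := by
    rw [← hrange]
    have := AffineMap.image_convexHull (φ.toAffineMap) (Set.range b)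
    simpa using this.symm
  have key : intrinsicInterior ℝ (convexHull ℝ (V : Set E)) =
      ⇑φ '' {y : W | ∀ i, 0 < B.coord i y} := by
    rw [hull_eq, AffineIsometry.image_intrinsicInterior,
      intrinsicInterior_eq_interior_of_affineSpan_eq_top (by rw [affineSpan_convexHull]; exact tot)]
    exact congrArg (Set.image ⇑φ) B.interior_convexHull
  rw [key]
  constructor
  · rintro ⟨y, hy, rfl⟩
    refine ⟨fun v => if h : v ∈ V then B.coord ⟨v, h⟩ y else 0, ?_, ?_, ?_⟩
    · intro v hv
      simpa [hv] using hy ⟨v, hv⟩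
    · rw [← Finset.sum_coe_sort V]
      have hstep : (∑ i : {v : E // v ∈ V}, (if h : (i : E) ∈ V then B.coord ⟨i, h⟩ y else 0))
          = ∑ i : {v : E // v ∈ V}, B.coord i y :=
        Finset.sum_congr rfl fun i _ => by simp [i.2]
      exact hstep.trans (B.sum_coord_apply_eq_one y)
    · have hmap := Finset.map_affineCombination Finset.univ b
        (fun i => B.coord i y) (B.sum_coord_apply_eq_one y) φ.toAffineMap
      have hself : Finset.univ.affineCombination ℝ b (fun i => B.coord i y) = y :=
        B.affineCombination_coord_eq_self y
      rw [hself, hφbc, Finset.affineCombination_eq_linear_combination Finset.univ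
        (fun i : {v : E // v ∈ V} => (i : E)) (fun i => B.coord i y)
        (B.sum_coord_apply_eq_one y)] at hmap
      rw [← Finset.sum_coe_sort V]
      have hstep : (∑ i : {v : E // v ∈ V},
            (if h : (i : E) ∈ V then B.coord ⟨i, h⟩ y else 0) • (i : E))
          = ∑ i : {v : E // v ∈ V}, B.coord i y • (i : E) :=
        Finset.sum_congr rfl fun i _ => by simp [i.2]
      exact hstep.trans hmap.symm
  · rintro ⟨w, hpos, hsum, rfl⟩
    have hsum' : ∑ i : {v : E // v ∈ V}, w i.val = 1 := by
      rw [Finset.sum_coe_sort]; exact hsum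
    refine ⟨Finset.univ.affineCombination ℝ b (fun i => w i.val), ?_, ?_⟩
    · intro i
      have hc := B.coord_apply_combination_of_mem (Finset.mem_univ i) hsum'
      exact lt_of_lt_of_eq (hpos i.val i.2) hc.symm
    · have hmap := Finset.map_affineCombination Finset.univ b
        (fun i => w i.val) hsum' φ.toAffineMap
      rw [hφbc, Finset.affineCombination_eq_linear_combination Finset.univ
        (fun i : {v : E // v ∈ V} => (i : E)) (fun i => w i.val) hsum'] at hmap
      exact hmap.trans (Finset.sum_coe_sort V (fun v => w v • v))


set_option linter.unusedSectionVars false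
section Poly
variable {E : Type*} [NormedAddCommGroup E] [NormedSpace ℝ E] [FiniteDimensional ℝ E]

lemma mem_convexHull_finset_iff (V : Finset E) (x : E) :
    x ∈ convexHull ℝ (V : Set E) ↔
      ∃ w : E → ℝ, (∀ v ∈ V, 0 ≤ w v) ∧ ∑ v ∈ V, w v = 1 ∧ ∑ v ∈ V, w v • v = x := by
  rw [Finset.convexHull_eq]
  constructor
  · rintro ⟨w, h0, h1, hx⟩
    exact ⟨w, h0, h1, by rwa [Finset.centerMass_eq_of_sum_1 _ _ h1] at hx⟩
  · rintro ⟨w, h0, h1, hx⟩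
    exact ⟨w, h0, h1, by rwa [Finset.centerMass_eq_of_sum_1 _ _ h1]⟩

lemma weights_unique {V : Finset E}
    (ind : AffineIndependent ℝ (fun x : {x : E // x ∈ V} => x.val))
    {w u : E → ℝ} (hw : ∑ v ∈ V, w v = 1) (hu : ∑ v ∈ V, u v = 1)
    (h : ∑ v ∈ V, w v • v = ∑ v ∈ V, u v • v) : ∀ v ∈ V, w v = u v := by
  have hw' : ∑ i : {x : E // x ∈ V}, w i.val = 1 := by rw [Finset.sum_coe_sort]; exact hw
  have hu' : ∑ i : {x : E // x ∈ V}, u i.val = 1 := by rw [Finset.sum_coe_sort]; exact hu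
  have hcomb : Finset.univ.affineCombination ℝ (fun i : {x : E // x ∈ V} => i.val)
        (fun i => w i.val)
      = Finset.univ.affineCombination ℝ (fun i : {x : E // x ∈ V} => i.val)
        (fun i => u i.val) := by
    rw [Finset.affineCombination_eq_linear_combination Finset.univ
        (fun i : {x : E // x ∈ V} => (i : E)) (fun i => w i.val) hw',
      Finset.affineCombination_eq_linear_combination Finset.univ
        (fun i : {x : E // x ∈ V} => (i : E)) (fun i => u i.val) hu']
    rw [Finset.sum_coe_sort V (fun v => w v • v), Finset.sum_coe_sort V (fun v => u v • v)]
    exact h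
  have := (affineIndependent_iff_eq_of_fintype_affineCombination_eq ℝ
      (fun i : {x : E // x ∈ V} => i.val)).1 ind _ _ hw' hu' hcomb
  intro v hv
  exact congrFun this ⟨v, hv⟩

lemma ind_subset {U V : Finset E} (hUV : U ⊆ V)
    (ind : AffineIndependent ℝ (fun x : {x : E // x ∈ V} => x.val)) :
    AffineIndependent ℝ (fun x : {x : E // x ∈ U} => x.val) := by
  have := ind.comp_embedding
    ⟨fun i : {x : E // x ∈ U} =>(⟨i.val, hUV i.2⟩ : {x : E // x ∈ V}),
      fun a b hab => by
        apply Subtype.ext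
        have : (⟨a.val, hUV a.2⟩ : {x : E // x ∈ V}).val = (⟨b.val, hUV b.2⟩ : {x : E // x ∈ V}).val :=
          congrArg Subtype.val hab
        exact this⟩
  exact this

lemma rint_disjoint_subsets {V W₁ W₂ : Finset E}
    (ind : AffineIndependent ℝ (fun x : {x : E // x ∈ V} => x.val))
    (h1 : W₁ ⊆ V) (h2 : W₂ ⊆ V) (hn1 : W₁.Nonempty) (hn2 : W₂.Nonempty) {x : E}
    (hx1 : x ∈ intrinsicInterior ℝ (convexHull ℝ (W₁ : Set E)))
    (hx2 : x ∈ intrinsicInterior ℝ (convexHull ℝ (W₂ : Set E))) : W₁ = W₂ := by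
  classical
  obtain ⟨w, hwpos, hwsum, hwx⟩ :=
    (mem_intrinsicInterior_convexHull_iff hn1 (ind_subset h1 ind)).1 hx1
  obtain ⟨u, hupos, husum, hux⟩ :=
    (mem_intrinsicInterior_convexHull_iff hn2 (ind_subset h2 ind)).1 hx2
  set w' : E → ℝ := fun v => if v ∈ W₁ then w v else 0 with hw'
  set u' : E → ℝ := fun v => if v ∈ W₂ then u v else 0 with hu'
  have hsw : ∑ v ∈ V, w' v = 1 := by
    rw [← Finset.sum_subset h1 (fun v _ hv => by simp [w', hv])]
    rw [← hwsum]
    exact Finset.sum_congr rfl fun v hv => by simp [w', hv]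
  have hsu : ∑ v ∈ V, u' v = 1 := by
    rw [← Finset.sum_subset h2 (fun v _ hv => by simp [u', hv])]
    rw [← husum]
    exact Finset.sum_congr rfl fun v hv => by simp [u', hv]
  have hvw : ∑ v ∈ V, w' v • v = x := by
    rw [← Finset.sum_subset h1 (fun v _ hv => by simp [w', hv])]
    rw [← hwx]
    exact Finset.sum_congr rfl fun v hv => by simp [w', hv]
  have hvu : ∑ v ∈ V, u' v • v = x := by
    rw [← Finset.sum_subset h2 (fun v _ hv => by simp [u', hv])]
    rw [← hux]
    exact Finset.sum_congr rfl fun v hv => by simp [u', hv]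
  have heq := weights_unique ind hsw hsu (hvw.trans hvu.symm)
  ext v
  constructor
  · intro hv
    by_contra hv2
    have : w' v = u' v := heq v (h1 hv)
    rw [hw', hu'] at this
    simp only [if_pos hv, if_neg hv2] at this
    exact absurd this (ne_of_gt (hwpos v hv))
  · intro hv
    by_contra hv1
    have : w' v = u' v := heq v (h2 hv)
    simp only [w', u', if_pos hv, if_neg hv1] at this
    exact absurd this.symm (ne_of_gt (hupos v hv))

lemma mem_hull_iff_exists_rint {V : Finset E} (hV : V.Nonempty)
    (ind : AffineIndependent ℝ (fun x : {x : E // x ∈ V} => x.val)) {x : E} :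
    x ∈ convexHull ℝ (V : Set E) ↔ ∃ U : Finset E, U ⊆ V ∧ U.Nonempty ∧
      x ∈ intrinsicInterior ℝ (convexHull ℝ (U : Set E)) := by
  classical
  constructor
  · intro hx
    obtain ⟨w, h0, h1, hx⟩ := (mem_convexHull_finset_iff V x).1 hx
    set U : Finset E := V.filter (fun v => 0 < w v) with hU
    have hUV : U ⊆ V := Finset.filter_subset _ _
    have hzero : ∀ v ∈ V, v ∉ U → w v = 0 := by
      intro v hv hvU
      rw [hU, Finset.mem_filter] at hvU
      push_neg at hvU
      exact le_antisymm (hvU hv) (h0 v hv)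
    have hUne : U.Nonempty := by
      by_contra hne
      rw [Finset.not_nonempty_iff_eq_empty] at hne
      have : ∑ v ∈ V, w v = 0 := Finset.sum_eq_zero fun v hv =>
        hzero v hv (by rw [hne]; exact Finset.notMem_empty v)
      rw [h1] at this
      exact one_ne_zero this
    refine ⟨U, hUV, hUne, ?_⟩
    rw [mem_intrinsicInterior_convexHull_iff hUne (ind_subset hUV ind)]
    refine ⟨w, fun v hv => (Finset.mem_filter.1 hv).2, ?_, ?_⟩
    · rw [Finset.sum_subset hUV (fun v hv hvU => hzero v hv hvU)]
      exact h1
    · rw [Finset.sum_subset hUV (fun v hv hvU => by rw [hzero v hv hvU, zero_smul])]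
      exact hx
  · rintro ⟨U, hUV, hUne, hx⟩
    exact convexHull_mono (by exact_mod_cast hUV) (intrinsicInterior_subset hx)

lemma rint_hull_nonempty {V : Finset E} (hV : V.Nonempty) :
    (intrinsicInterior ℝ (convexHull ℝ (V : Set E))).Nonempty := by
  obtain ⟨v, hv⟩ := hV
  exact Set.Nonempty.intrinsicInterior (convex_convexHull ℝ _)
    ⟨v, subset_convexHull ℝ _ (Finset.mem_coe.2 hv)⟩

end Poly

section Triang
variable {n : ℕ}

lemma IsFaceOf.subset {s t : Set (Fin n → ℝ)} (h : IsFaceOf s t) : s ⊆ t := by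
  obtain ⟨W, V, _, _, rfl, _, hVW, rfl⟩ := h
  exact convexHull_mono (by exact_mod_cast hVW)

lemma IsFaceOf.nonempty {s t : Set (Fin n → ℝ)} (h : IsFaceOf s t) : s.Nonempty := by
  obtain ⟨W, V, _, _, rfl, hVne, hVW, rfl⟩ := h
  obtain ⟨v, hv⟩ := hVne
  exact ⟨v, subset_convexHull ℝ _ (Finset.mem_coe.2 hv)⟩

lemma simplex_nonempty {s : Set (Fin n → ℝ)} (h : IsSimplex s) : s.Nonempty := by
  obtain ⟨V, hVne, _, rfl⟩ := h
  obtain ⟨v, hv⟩ := hVne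
  exact ⟨v, subset_convexHull ℝ _ (Finset.mem_coe.2 hv)⟩

lemma faceOf_of_subset {K : Set (Set (Fin n → ℝ))} (hK : IsTriangulation K)
    {s t : Set (Fin n → ℝ)} (hs : s ∈ K) (ht : t ∈ K) (hsub : s ⊆ t) : IsFaceOf s t := by
  rcases hK.inter s hs t ht with hemp | ⟨_, hface⟩
  · obtain ⟨x, hx⟩ := simplex_nonempty (hK.simplex s hs)
    exact absurd (Set.eq_empty_iff_forall_notMem.1 hemp x) (by simp [hx, hsub hx])
  · rwa [Set.inter_eq_left.2 hsub] at hface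

lemma subset_of_rint_mem {K : Set (Set (Fin n → ℝ))} (hK : IsTriangulation K)
    {s t : Set (Fin n → ℝ)} (hs : s ∈ K) (ht : t ∈ K) {x : Fin n → ℝ}
    (hxs : x ∈ intrinsicInterior ℝ s) (hxt : x ∈ t) : s ⊆ t := by
  have hxs' : x ∈ s := intrinsicInterior_subset hxs
  rcases hK.inter s hs t ht with hemp | ⟨hface, _⟩
  · exact absurd (Set.eq_empty_iff_forall_notMem.1 hemp x) (by simp [hxs', hxt])
  · obtain ⟨Ws, Vs, hWsne, indWs, hsEq, hVsne, hVsW, hIntEq⟩ := hface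
    have hxrs : x ∈ intrinsicInterior ℝ (convexHull ℝ (Ws : Set (Fin n → ℝ))) := hsEq ▸ hxs
    have hxV : x ∈ convexHull ℝ (Vs : Set (Fin n → ℝ)) := by
      rw [← hIntEq]; exact ⟨hxs', hxt⟩
    obtain ⟨U, hUVs, hUne, hxU⟩ :=
      (mem_hull_iff_exists_rint hVsne (ind_subset hVsW indWs)).1 hxV
    have hWU : Ws = U :=
      rint_disjoint_subsets indWs subset_rfl (hUVs.trans hVsW) hWsne hUne hxrs hxU
    intro y hy
    have hy1 : y ∈ convexHull ℝ (Ws : Set (Fin n → ℝ)) := hsEq ▸ hy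
    rw [hWU] at hy1
    have hy2 : y ∈ convexHull ℝ (Vs : Set (Fin n → ℝ)) :=
      convexHull_mono (by exact_mod_cast hUVs) hy1
    rw [← hIntEq] at hy2
    exact hy2.2

lemma rint_unique {K : Set (Set (Fin n → ℝ))} (hK : IsTriangulation K)
    {s t : Set (Fin n → ℝ)} (hs : s ∈ K) (ht : t ∈ K) {x : Fin n → ℝ}
    (hxs : x ∈ intrinsicInterior ℝ s) (hxt : x ∈ intrinsicInterior ℝ t) : s = t :=
  Set.Subset.antisymm
    (subset_of_rint_mem hK hs ht hxs (intrinsicInterior_subset hxt))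
    (subset_of_rint_mem hK ht hs hxt (intrinsicInterior_subset hxs))

lemma mem_sUnion_iff_rint {K : Set (Set (Fin n → ℝ))} (hK : IsTriangulation K)
    {D : Set (Set (Fin n → ℝ))} (hD : D ⊆ K) (hfc : FaceClosed D) {x : Fin n → ℝ} :
    x ∈ ⋃₀ D ↔ ∃ s ∈ D, x ∈ intrinsicInterior ℝ s := by
  constructor
  · rintro ⟨s, hsD, hxs⟩
    obtain ⟨V, hVne, ind, hsEq⟩ := hK.simplex s (hD hsD)
    obtain ⟨U, hUV, hUne, hxU⟩ :=
      (mem_hull_iff_exists_rint hVne ind).1 (hsEq ▸ hxs)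
    have hface : IsFaceOf (convexHull ℝ (U : Set (Fin n → ℝ))) s :=
      ⟨V, U, hVne, ind, hsEq, hUne, hUV, rfl⟩
    exact ⟨_, hfc s hsD _ hface, hxU⟩
  · rintro ⟨s, hsD, hxs⟩
    exact ⟨s, hsD, intrinsicInterior_subset hxs⟩

lemma faceClosed_K {K : Set (Set (Fin n → ℝ))} (hK : IsTriangulation K) : FaceClosed K :=
  fun s hs t ht => hK.face_mem s hs t ht

lemma defOpen_empty {K : Set (Set (Fin n → ℝ))} (hK : IsTriangulation K) :
    SigmaDefOpen K (∅ : Set (Fin n → ℝ)) :=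
  ⟨⋃₀ K, ⟨K, subset_rfl, faceClosed_K hK, rfl⟩, (Set.diff_self).symm⟩

lemma defOpen_union {K : Set (Set (Fin n → ℝ))} (hK : IsTriangulation K)
    {A B : Set (Fin n → ℝ)} (hA : SigmaDefOpen K A) (hB : SigmaDefOpen K B) :
    SigmaDefOpen K (A ∪ B) := by
  obtain ⟨C₁, ⟨D₁, hD₁K, hfc₁, rfl⟩, rfl⟩ := hA
  obtain ⟨C₂, ⟨D₂, hD₂K, hfc₂, rfl⟩, rfl⟩ := hB
  refine ⟨⋃₀ (D₁ ∩ D₂), ⟨D₁ ∩ D₂, (Set.inter_subset_left).trans hD₁K,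
    fun s hs t ht => ⟨hfc₁ s hs.1 t ht, hfc₂ s hs.2 t ht⟩, rfl⟩, ?_⟩
  ext x
  simp only [Set.mem_union, Set.mem_diff]
  constructor
  · rintro (⟨hxK, hx1⟩ | ⟨hxK, hx2⟩)
    · exact ⟨hxK, fun hx => hx1 (Set.sUnion_mono Set.inter_subset_left hx)⟩
    · exact ⟨hxK, fun hx => hx2 (Set.sUnion_mono Set.inter_subset_right hx)⟩
  · rintro ⟨hxK, hx⟩
    by_cases h1 : x ∈ ⋃₀ D₁
    · by_cases h2 : x ∈ ⋃₀ D₂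
      · obtain ⟨s, hsD, hxs⟩ := (mem_sUnion_iff_rint hK hD₁K hfc₁).1 h1
        obtain ⟨t, htD, hxt⟩ := (mem_sUnion_iff_rint hK hD₂K hfc₂).1 h2
        have hst : s = t := rint_unique hK (hD₁K hsD) (hD₂K htD) hxs hxt
        exact (hx ⟨s, ⟨hsD, hst ▸ htD⟩, intrinsicInterior_subset hxs⟩).elim
      · exact Or.inr ⟨hxK, h2⟩
    · exact Or.inl ⟨hxK, h1⟩

lemma mem_openStar_iff {K : Set (Set (Fin n → ℝ))} {σ : Set (Fin n → ℝ)} {x : Fin n → ℝ} :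
    x ∈ openStar K σ ↔ ∃ t, (t ∈ K ∧ σ ⊆ t) ∧ x ∈ intrinsicInterior ℝ t := by
  unfold openStar
  rw [Set.mem_iUnion₂]
  constructor
  · rintro ⟨t, ⟨htK, hst⟩, hx⟩; exact ⟨t, ⟨htK, hst⟩, hx⟩
  · rintro ⟨t, ⟨htK, hst⟩, hx⟩; exact ⟨t, ⟨htK, hst⟩, hx⟩

lemma defOpen_star {K : Set (Set (Fin n → ℝ))} (hK : IsTriangulation K)
    {σ : Set (Fin n → ℝ)} (hσ : σ ∈ K) : SigmaDefOpen K (openStar K σ) := by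
  set D : Set (Set (Fin n → ℝ)) := {t | t ∈ K ∧ ¬ σ ⊆ t} with hD
  have hDK : D ⊆ K := fun t ht => ht.1
  have hfc : FaceClosed D := by
    rintro t ⟨htK, hnsub⟩ f hf
    exact ⟨hK.face_mem t htK f hf, fun hσf => hnsub (hσf.trans hf.subset)⟩
  refine ⟨⋃₀ D, ⟨D, hDK, hfc, rfl⟩, ?_⟩
  ext x
  rw [mem_openStar_iff]
  constructor
  · rintro ⟨t, ⟨htK, hσt⟩, hxt⟩
    refine ⟨⟨t, htK, intrinsicInterior_subset hxt⟩, fun hxD => ?_⟩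
    obtain ⟨u, ⟨huK, hnsub⟩, hxu⟩ := (mem_sUnion_iff_rint hK hDK hfc).1 hxD
    exact hnsub ((rint_unique hK huK htK hxu hxt) ▸ hσt)
  · rintro ⟨hxK, hxD⟩
    obtain ⟨t, htK, hxt⟩ := (mem_sUnion_iff_rint hK subset_rfl (faceClosed_K hK)).1 hxK
    refine ⟨t, ⟨htK, ?_⟩, hxt⟩
    by_contra hnsub
    exact hxD ⟨t, ⟨htK, hnsub⟩, intrinsicInterior_subset hxt⟩

end Triang

lemma rint_subset_star {n : ℕ} {K : Set (Set (Fin n → ℝ))} {σ : Set (Fin n → ℝ)}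
    (hσ : σ ∈ K) : intrinsicInterior ℝ σ ⊆ openStar K σ :=
  fun _ hx => mem_openStar_iff.2 ⟨σ, ⟨hσ, subset_rfl⟩, hx⟩

lemma star_subset_defOpen {n : ℕ} {K : Set (Set (Fin n → ℝ))} (hK : IsTriangulation K)
    {σ : Set (Fin n → ℝ)} (hσK : σ ∈ K)
    {D : Set (Set (Fin n → ℝ))} (hDK : D ⊆ K) (hfc : FaceClosed D) {x : Fin n → ℝ}
    (hxσ : x ∈ intrinsicInterior ℝ σ) (hxA : x ∈ ⋃₀ K \ ⋃₀ D) :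
    openStar K σ ⊆ ⋃₀ K \ ⋃₀ D := by
  intro y hy
  obtain ⟨t, ⟨htK, hσt⟩, hyt⟩ := mem_openStar_iff.1 hy
  refine ⟨⟨t, htK, intrinsicInterior_subset hyt⟩, fun hyD => ?_⟩
  obtain ⟨u, huD, hyu⟩ := (mem_sUnion_iff_rint hK hDK hfc).1 hyD
  have hut : u = t := rint_unique hK (hDK huD) htK hyu hyt
  have htD : t ∈ D := hut ▸ huD
  have hσD : σ ∈ D := hfc t htD σ (faceOf_of_subset hK hσK htK hσt)
  exact hxA.2 ⟨σ, hσD, intrinsicInterior_subset hxσ⟩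

lemma defOpen_biUnion_star {n : ℕ} {K : Set (Set (Fin n → ℝ))} (hK : IsTriangulation K) :
    ∀ S : Finset (Set (Fin n → ℝ)), (∀ σ ∈ S, σ ∈ K) →
      SigmaDefOpen K (⋃ σ ∈ S, openStar K σ) := by
  classical
  intro S
  induction S using Finset.induction_on with
  | empty => intro _; simpa using defOpen_empty hK
  | @insert a S ha IH =>
    intro hS
    rw [Finset.set_biUnion_insert]
    exact defOpen_union hK (defOpen_star hK (hS a (Finset.mem_insert_self a S)))
      (IH fun σ hσ => hS σ (Finset.mem_insert_of_mem hσ))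

lemma eq_star_of_biUnion {n : ℕ} {K : Set (Set (Fin n → ℝ))} (hK : IsTriangulation K)
    (O : Set (Fin n → ℝ))
    (hJI : ∀ A B : Set (Fin n → ℝ), SigmaDefOpen K A → SigmaDefOpen K B →
        O = A ∪ B → O = A ∨ O = B) :
    ∀ S : Finset (Set (Fin n → ℝ)), (∀ σ ∈ S, σ ∈ K) →
      O = ⋃ σ ∈ S, openStar K σ → O = ∅ ∨ ∃ σ ∈ S, O = openStar K σ := by
  classical
  intro S
  induction S using Finset.induction_on with
  | empty => intro _ hO; left; simpa using hO
  | @insert a S ha IH =>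
    intro hS hO
    rw [Finset.set_biUnion_insert] at hO
    rcases hJI (openStar K a) (⋃ σ ∈ S, openStar K σ)
        (defOpen_star hK (hS a (Finset.mem_insert_self a S)))
        (defOpen_biUnion_star hK S (fun σ hσ => hS σ (Finset.mem_insert_of_mem hσ))) hO with
      h | h
    · exact Or.inr ⟨a, Finset.mem_insert_self a S, h⟩
    · rcases IH (fun σ hσ => hS σ (Finset.mem_insert_of_mem hσ)) h with hemp | ⟨σ, hσS, hOσ⟩
      · exact Or.inl hemp
      · exact Or.inr ⟨σ, Finset.mem_insert_of_mem hσS, hOσ⟩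

/-- A nonempty `K`-definable open set `O` is join-irreducible in the
lattice of `K`-definable open sets iff `O` is the open star of some simplex of `K`. -/
theorem joinIrreducible_iff_openStar {n : ℕ} (K : Set (Set (Fin n → ℝ)))
    (hK : IsTriangulation K)
    (O : Set (Fin n → ℝ)) (hO : SigmaDefOpen K O) (hne : O.Nonempty) :
    (∀ A B : Set (Fin n → ℝ), SigmaDefOpen K A → SigmaDefOpen K B →
        O = A ∪ B → O = A ∨ O = B) ↔ ∃ s ∈ K, O = openStar K s := by
  classical
  constructor
  · intro hJI
    obtain ⟨C, ⟨D, hDK, hfc, rfl⟩, hOeq⟩ := hO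
    have hUfin : {s | s ∈ K ∧ s ∉ D}.Finite := hK.finite.subset (fun s hs => hs.1)
    set S := hUfin.toFinset with hS
    have hSK : ∀ σ ∈ S, σ ∈ K := fun σ hσ => (hUfin.mem_toFinset.1 hσ).1
    have hOS : O = ⋃ σ ∈ S, openStar K σ := by
      rw [hOeq]
      ext x
      rw [Set.mem_iUnion₂]
      constructor
      · rintro ⟨hxK, hxD⟩
        obtain ⟨σ, hσK, hxσ⟩ := (mem_sUnion_iff_rint hK subset_rfl (faceClosed_K hK)).1 hxK
        have hσD : σ ∉ D := fun h => hxD ⟨σ, h, intrinsicInterior_subset hxσ⟩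
        exact ⟨σ, hUfin.mem_toFinset.2 ⟨hσK, hσD⟩, rint_subset_star hσK hxσ⟩
      · rintro ⟨σ, hσS, hxσ⟩
        obtain ⟨hσK, hσD⟩ := hUfin.mem_toFinset.1 hσS
        obtain ⟨t, ⟨htK, hσt⟩, hxt⟩ := mem_openStar_iff.1 hxσ
        refine ⟨⟨t, htK, intrinsicInterior_subset hxt⟩, fun hxD => ?_⟩
        obtain ⟨u, huD, hxu⟩ := (mem_sUnion_iff_rint hK hDK hfc).1 hxD
        have hut : u = t := rint_unique hK (hDK huD) htK hxu hxt
        exact hσD (hfc t (hut ▸ huD) σ (faceOf_of_subset hK hσK htK hσt))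
    rcases eq_star_of_biUnion hK O hJI S hSK hOS with hemp | ⟨σ, hσS, hOσ⟩
    · exact absurd hemp hne.ne_empty
    · exact ⟨σ, hSK σ hσS, hOσ⟩
  · rintro ⟨σ, hσK, rfl⟩
    intro A B hA hB hO'
    obtain ⟨V, hVne, ind, hσEq⟩ := hK.simplex σ hσK
    have hrne : (intrinsicInterior ℝ σ).Nonempty := by
      rw [hσEq]; exact rint_hull_nonempty hVne
    obtain ⟨x, hxσ⟩ := hrne
    have hxO : x ∈ openStar K σ := rint_subset_star hσK hxσ
    rw [hO'] at hxO
    obtain ⟨CA, ⟨DA, hDAK, hfcA, rfl⟩, rfl⟩ := hA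
    obtain ⟨CB, ⟨DB, hDBK, hfcB, rfl⟩, rfl⟩ := hB
    rcases hxO with hxA | hxB
    · left
      exact Set.Subset.antisymm (star_subset_defOpen hK hσK hDAK hfcA hxσ hxA)
        (by rw [hO']; exact Set.subset_union_left)
    · right
      exact Set.Subset.antisymm (star_subset_defOpen hK hσK hDBK hfcB hxσ hxB)
        (by rw [hO']; exact Set.subset_union_right)
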